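/- Let A and B be groups with a common subgroup C such that B = C ⋉ N is an (internal) semidirect product of C with a normal subgroup N of B. Then the amalgamated free product A *_C B is isomorphic to the semidirect product A ⋉ K, where K is the normal closure of N in A *_C B. Moreover K ∩ B = N. -/

import Mathlib

universe u

/-- The two-element family of groups used to form the amalgam `A *_C B`
as an indexed pushout over `Bool`. -/
def AmalgamFam (A B : Type u) : Bool → Type u
  | false => A
  | true => B

instance (A B : Type u) [Group A] [Group B] : ∀ b, Group (AmalgamFam A B b)
  | false => ‹Group A›
  | true => ‹Group B›

/-- The pair of inclusions `C → A`, `C → B` as a family indexed by `Bool`. -/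
def amalgamHom {A B : Type u} {C : Type*} [Group A] [Group B] [Group C]
    (f₁ : C →* A) (f₂ : C →* B) : ∀ b, C →* AmalgamFam A B b
  | false => f₁
  | true => f₂

section Aux

open Monoid Subgroup

variable {B : Type*} {C : Type*} [Group B] [Group C]
    (f₂ : C →* B) (hf₂ : Function.Injective f₂)
    (N : Subgroup B) [N.Normal] (hsemi : Subgroup.IsComplement' f₂.range N)

include hf₂ hsemi in
theorem auxBij : Function.Bijective ((QuotientGroup.mk' N).comp f₂) := by
  constructor
  · rw [injective_iff_map_eq_one]
    intro c hc
    have hmem : f₂ c ∈ N := (QuotientGroup.eq_one_iff _).mp hc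
    have hmem2 : f₂ c ∈ f₂.range ⊓ N := ⟨⟨c, rfl⟩, hmem⟩
    rw [hsemi.disjoint.eq_bot] at hmem2
    exact hf₂ (by simpa using hmem2)
  · intro x
    induction x using QuotientGroup.induction_on with
    | H b =>
      obtain ⟨⟨⟨h, hh⟩, ⟨n, hn⟩⟩, heq, -⟩ := hsemi.existsUnique b
      obtain ⟨c, rfl⟩ := hh
      refine ⟨c, ?_⟩
      simp only [MonoidHom.comp_apply, QuotientGroup.mk'_apply]
      rw [QuotientGroup.eq]
      have : (f₂ c)⁻¹ * b = n := by
        rw [← heq]; group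
      rw [this]; exact hn

/-- The projection `B →* C` coming from the semidirect decomposition `B = C ⋉ N`. -/
noncomputable def piHom : B →* C :=
  (MulEquiv.ofBijective _ (auxBij f₂ hf₂ N hsemi)).symm.toMonoidHom.comp
    (QuotientGroup.mk' N)

theorem piHom_spec (b : B) :
    (QuotientGroup.mk' N) (f₂ (piHom f₂ hf₂ N hsemi b)) = QuotientGroup.mk' N b :=
  (MulEquiv.ofBijective _ (auxBij f₂ hf₂ N hsemi)).apply_symm_apply
    ((QuotientGroup.mk' N) b)

theorem piHom_f₂ (c : C) : piHom f₂ hf₂ N hsemi (f₂ c) = c :=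
  (MulEquiv.ofBijective _ (auxBij f₂ hf₂ N hsemi)).symm_apply_apply c

theorem piHom_decomp (b : B) : (f₂ (piHom f₂ hf₂ N hsemi b))⁻¹ * b ∈ N := by
  have := piHom_spec f₂ hf₂ N hsemi b
  simpa [QuotientGroup.eq] using this

theorem piHom_eq_one_iff (b : B) : piHom f₂ hf₂ N hsemi b = 1 ↔ b ∈ N := by
  constructor
  · intro h
    have := piHom_decomp f₂ hf₂ N hsemi b
    rw [h] at this
    simpa using this
  · intro hb
    have h1 : (QuotientGroup.mk' N) b = 1 := (QuotientGroup.eq_one_iff _).mpr hb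
    show (MulEquiv.ofBijective _ (auxBij f₂ hf₂ N hsemi)).symm ((QuotientGroup.mk' N) b) = 1
    rw [h1, map_one]

end Aux

section Aux2

open Monoid Subgroup

variable {A B : Type u} {C : Type*} [Group A] [Group B] [Group C]
    (f₁ : C →* A) (f₂ : C →* B) (hf₂ : Function.Injective f₂)
    (N : Subgroup B) [N.Normal] (hsemi : Subgroup.IsComplement' f₂.range N)

/-- The family of homs used to define the retraction `A *_C B →* A`. -/
noncomputable def famHom : ∀ i, AmalgamFam A B i →* A
  | false => MonoidHom.id A
  | true => f₁.comp (piHom f₂ hf₂ N hsemi : B →* C)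

theorem famHom_comp : ∀ i, (famHom f₁ f₂ hf₂ N hsemi i).comp (amalgamHom f₁ f₂ i) = f₁
  | false => rfl
  | true => by
      ext c
      exact congrArg f₁ (piHom_f₂ f₂ hf₂ N hsemi c)

/-- The retraction `A *_C B →* A`. -/
noncomputable def retr : Monoid.PushoutI (amalgamHom f₁ f₂) →* A :=
  Monoid.PushoutI.lift (famHom f₁ f₂ hf₂ N hsemi) f₁ (famHom_comp f₁ f₂ hf₂ N hsemi)

theorem retr_of_false (a : A) :
    retr f₁ f₂ hf₂ N hsemi (Monoid.PushoutI.of (φ := amalgamHom f₁ f₂) false a) = a :=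
  Monoid.PushoutI.lift_of _ _ _ _

theorem retr_of_true (b : B) :
    retr f₁ f₂ hf₂ N hsemi (Monoid.PushoutI.of (φ := amalgamHom f₁ f₂) true b)
      = f₁ (piHom f₂ hf₂ N hsemi b) :=
  Monoid.PushoutI.lift_of _ _ _ _

end Aux2

/-- If `B = C ⋉ N` is an internal semidirect product, then `A *_C B ≅ A ⋉ K`, where `K`
is the normal closure of `N` in `A *_C B`; moreover `K ∩ B = N`. -/
theorem stmt_3 (A B : Type u) (C : Type*) [Group A] [Group B] [Group C]
    (f₁ : C →* A) (f₂ : C →* B)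
    (hf₁ : Function.Injective f₁) (hf₂ : Function.Injective f₂)
    (N : Subgroup B) (hN : N.Normal)
    (hsemi : Subgroup.IsComplement' f₂.range N)
    (K : Subgroup (Monoid.PushoutI (amalgamHom f₁ f₂)))
    (hK : K = Subgroup.normalClosure
        ((Monoid.PushoutI.of (φ := amalgamHom f₁ f₂) true) '' (N : Set B))) :
    K.Normal ∧
    Subgroup.IsComplement' K ((Monoid.PushoutI.of (φ := amalgamHom f₁ f₂) false).range) ∧
    (∃ act : A →* MulAut ↥K,
        Nonempty (Monoid.PushoutI (amalgamHom f₁ f₂) ≃* K ⋊[act] A)) ∧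
    K ⊓ (Monoid.PushoutI.of (φ := amalgamHom f₁ f₂) true).range
      = Subgroup.map (Monoid.PushoutI.of (φ := amalgamHom f₁ f₂) true) N := by
  haveI := hN
  haveI hKn : K.Normal := hK ▸ Subgroup.normalClosure_normal
  set P := Monoid.PushoutI (amalgamHom f₁ f₂) with hP
  let ofF : A →* P := Monoid.PushoutI.of (φ := amalgamHom f₁ f₂) false
  let ofT : B →* P := Monoid.PushoutI.of (φ := amalgamHom f₁ f₂) true
  let π : B →* C := piHom f₂ hf₂ N hsemi
  let r : P →* A := retr f₁ f₂ hf₂ N hsemi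
  have hrF : ∀ a : A, r (ofF a) = a := retr_of_false f₁ f₂ hf₂ N hsemi
  have hrT : ∀ b : B, r (ofT b) = f₁ (π b) := retr_of_true f₁ f₂ hf₂ N hsemi
  have hNsub : ∀ n ∈ N, ofT n ∈ K := fun n hn =>
    hK ▸ Subgroup.subset_normalClosure ⟨n, hn, rfl⟩
  -- of true and of false agree along C
  have hbase : ∀ c : C, ofF (f₁ c) = ofT (f₂ c) := fun c =>
    (Monoid.PushoutI.of_apply_eq_base (amalgamHom f₁ f₂) false c).trans
      (Monoid.PushoutI.of_apply_eq_base (amalgamHom f₁ f₂) true c).symm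
  -- K = ker r
  have hKker : K = r.ker := by
    apply le_antisymm
    · rw [hK]
      apply Subgroup.normalClosure_le_normal
      rintro _ ⟨n, hn, rfl⟩
      show r (ofT n) = 1
      refine (hrT n).trans ?_
      have : π n = 1 := (piHom_eq_one_iff f₂ hf₂ N hsemi n).mpr hn
      rw [this, map_one]
    · intro g hg
      let q : P →* P ⧸ K := QuotientGroup.mk' K
      have hfalse : ∀ a : A, q (ofF (r (ofF a))) = q (ofF a) := fun a => by rw [hrF]
      have htrue : ∀ b : B, q (ofF (r (ofT b))) = q (ofT b) := by
        intro b
        rw [hrT, hbase]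
        have hdecomp : b = f₂ (π b) * ((f₂ (π b))⁻¹ * b) := by group
        have hnmem : (f₂ (π b))⁻¹ * b ∈ N := piHom_decomp f₂ hf₂ N hsemi b
        conv_rhs => rw [hdecomp]
        rw [map_mul, map_mul]
        have h1 : q (ofT ((f₂ (π b))⁻¹ * b)) = 1 :=
          (QuotientGroup.eq_one_iff _).mpr (hNsub _ hnmem)
        rw [h1, mul_one]
      have key : q.comp (ofF.comp r) = q := by
        apply Monoid.PushoutI.hom_ext_nonempty
        intro i
        match i with
        | false => ext a; exact hfalse a
        | true => ext b; exact htrue b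
      have : q g = 1 := by
        have := congrArg (fun f : P →* P ⧸ K => f g) key
        simp only [MonoidHom.comp_apply] at this
        rw [← this, hg, map_one, map_one]
      exact (QuotientGroup.eq_one_iff _).mp this
  have hKle : ∀ {x : P}, x ∈ K → r x = 1 := fun hx => hKker.le hx
  have hKge : ∀ {x : P}, r x = 1 → x ∈ K := fun hx => hKker.ge hx
  refine ⟨hKn, ?_, ?_, ?_⟩
  · -- complement
    rw [Subgroup.isComplement'_def, Subgroup.isComplement_iff_existsUnique]
    intro g
    refine ⟨⟨⟨g * (ofF (r g))⁻¹, ?_⟩, ⟨ofF (r g), ⟨r g, rfl⟩⟩⟩, by simp, ?_⟩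
    · apply hKge
      rw [map_mul, map_inv, hrF, mul_inv_cancel]
    · rintro ⟨⟨k, hk⟩, ⟨s, hs⟩⟩ h
      obtain ⟨a, rfl⟩ := hs
      simp only at h
      have hk1 : r k = 1 := hKle hk
      have ha : a = r g := by
        have h2 := congrArg r h
        rw [map_mul, hk1, one_mul] at h2
        exact (hrF a).symm.trans h2
      have hofa : (Monoid.PushoutI.of (φ := amalgamHom f₁ f₂) false) a = ofF (r g) :=
        congrArg (fun x : A => ofF x) ha
      have hmul : k * ofF (r g) = g := by rw [← hofa]; exact h
      have hkeq : k = g * (ofF (r g))⁻¹ := eq_mul_inv_of_mul_eq hmul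
      refine Prod.ext (Subtype.ext hkeq) (Subtype.ext hofa)
  · -- semidirect product
    refine ⟨(MulAut.conjNormal (H := K)).comp ofF, ?_⟩
    have hcond : ∀ a : A, K.subtype.comp
        (((MulAut.conjNormal (H := K)).comp ofF a).toMonoidHom)
        = (MulAut.conj (ofF a)).toMonoidHom.comp K.subtype := by
      intro a
      ext k
      simp [MulAut.conjNormal_apply]
    let ψ : K ⋊[(MulAut.conjNormal (H := K)).comp ofF] A →* P :=
      SemidirectProduct.lift K.subtype ofF hcond
    have hψ : ∀ x : K ⋊[(MulAut.conjNormal (H := K)).comp ofF] A,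
        ψ x = (x.left : P) * ofF x.right := fun x => rfl
    have hψinr : ∀ a : A, ψ (SemidirectProduct.inr a) = ofF a := fun a =>
      SemidirectProduct.lift_inr K.subtype ofF hcond a
    have hψinl : ∀ k : K, ψ (SemidirectProduct.inl k) = (k : P) := fun k =>
      SemidirectProduct.lift_inl K.subtype ofF hcond k
    have hinj : Function.Injective ψ := by
      rw [injective_iff_map_eq_one]
      intro x hx
      rw [hψ] at hx
      have hxl : r (x.left : P) = 1 := hKle x.left.2
      have hxr : x.right = 1 := by
        have h2 := congrArg r hx
        rw [map_mul, hxl, one_mul, map_one] at h2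
        exact (hrF x.right).symm.trans h2
      have hxl' : (x.left : P) = 1 := by
        rw [hxr, map_one, mul_one] at hx
        exact hx
      ext
      · exact hxl'
      · exact hxr
    have hsurj : Function.Surjective ψ := by
      intro g
      have : g ∈ ψ.range := by
        have htrue : ∀ b : B, ofT b ∈ ψ.range := by
          intro b
          have hdecomp : b = f₂ (π b) * ((f₂ (π b))⁻¹ * b) := by group
          have hnmem : (f₂ (π b))⁻¹ * b ∈ N := piHom_decomp f₂ hf₂ N hsemi b
          rw [show ofT b = ofT (f₂ (π b)) * ofT ((f₂ (π b))⁻¹ * b) by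
            rw [← map_mul]; exact congrArg ofT hdecomp]
          refine mul_mem ?_ ?_
          · rw [← hbase]
            exact ⟨SemidirectProduct.inr (f₁ (π b)), hψinr _⟩
          · exact ⟨SemidirectProduct.inl ⟨ofT ((f₂ (π b))⁻¹ * b), hNsub _ hnmem⟩,
              hψinl _⟩
        induction g using Monoid.PushoutI.induction_on with
        | of i g =>
          match i with
          | false => exact ⟨SemidirectProduct.inr g, hψinr g⟩
          | true => exact htrue g
        | base h =>
          rw [← Monoid.PushoutI.of_apply_eq_base (amalgamHom f₁ f₂) false h]
          exact ⟨SemidirectProduct.inr (f₁ h), hψinr (f₁ h)⟩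
        | mul x y hx hy => exact mul_mem hx hy
      exact this
    exact ⟨(MulEquiv.ofBijective ψ ⟨hinj, hsurj⟩).symm⟩
  · -- K ⊓ range (of true) = map (of true) N
    apply le_antisymm
    · rintro g ⟨hgK, b, rfl⟩
      have h1 : f₁ (π b) = 1 := (hrT b).symm.trans (hKle hgK)
      have h2 : π b = 1 := hf₁ (by rw [h1, map_one])
      exact ⟨b, (piHom_eq_one_iff f₂ hf₂ N hsemi b).mp h2, rfl⟩
    · rintro _ ⟨n, hn, rfl⟩
      exact ⟨hNsub n hn, ⟨n, rfl⟩⟩
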